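/- Let β : Lit_A → ℕ[X,X̄] be a provenance-tracking interpretation that is model-defining, with 𝔄_β the model it defines. Then for every first-order sentence φ over 𝒱: β⟦φ⟧ ≠ 0 if and only if 𝔄_β ⊨ φ. (Note that this does not follow from positivity of the semiring, since ℕ[X,X̄] has divisors of zero.) -/

import Mathlib

/-- A finite relational vocabulary: a type of relation symbols with arities. -/
structure Vocab : Type 1 where
  Rel : Type
  arity : Rel → ℕ

/-- First-order formulas over a relational vocabulary `𝒱` (with equality),
with variables from `Vars`.  Negated atoms are included as primitive literals. -/
inductive Formula (𝒱 : Vocab) (Vars : Type) : Type where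
  | rel    : (R : 𝒱.Rel) → (Fin (𝒱.arity R) → Vars) → Formula 𝒱 Vars
  | nrel   : (R : 𝒱.Rel) → (Fin (𝒱.arity R) → Vars) → Formula 𝒱 Vars
  | equal  : Vars → Vars → Formula 𝒱 Vars
  | nequal : Vars → Vars → Formula 𝒱 Vars
  | and    : Formula 𝒱 Vars → Formula 𝒱 Vars → Formula 𝒱 Vars
  | or     : Formula 𝒱 Vars → Formula 𝒱 Vars → Formula 𝒱 Vars
  | all    : Vars → Formula 𝒱 Vars → Formula 𝒱 Vars
  | ex     : Vars → Formula 𝒱 Vars → Formula 𝒱 Vars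
  | not    : Formula 𝒱 Vars → Formula 𝒱 Vars

/-- A ground literal over vocabulary `𝒱` and universe `A`: a positive
(`pos = true`) or negated (`pos = false`) ground atom `R(ā)`. -/
structure Lit (𝒱 : Vocab) (A : Type) where
  pos : Bool
  R : 𝒱.Rel
  args : Fin (𝒱.arity R) → A

/-- Negation of a literal (the negation of a literal is again a literal). -/
def Lit.neg {𝒱 : Vocab} {A : Type} (L : Lit 𝒱 A) : Lit 𝒱 A := ⟨!L.pos, L.R, L.args⟩

namespace Formula

variable {𝒱 : Vocab} {Vars : Type}

/-- Size of a formula (used for termination of the semiring semantics). -/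
def size : Formula 𝒱 Vars → ℕ
  | rel _ _ => 1
  | nrel _ _ => 1
  | equal _ _ => 1
  | nequal _ _ => 1
  | and φ ψ => φ.size + ψ.size + 1
  | or φ ψ => φ.size + ψ.size + 1
  | all _ φ => φ.size + 1
  | ex _ φ => φ.size + 1
  | not φ => φ.size + 1

mutual
/-- Negation normal form of a formula. -/
def nnf : Formula 𝒱 Vars → Formula 𝒱 Vars
  | rel R v => rel R v
  | nrel R v => nrel R v
  | equal x y => equal x y
  | nequal x y => nequal x y
  | and φ ψ => and φ.nnf ψ.nnf
  | or φ ψ => or φ.nnf ψ.nnf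
  | all x φ => all x φ.nnf
  | ex x φ => ex x φ.nnf
  | not φ => nnfNeg φ

/-- Negation normal form of the negation of a formula: `nnfNeg φ = nnf (¬φ)`. -/
def nnfNeg : Formula 𝒱 Vars → Formula 𝒱 Vars
  | rel R v => nrel R v
  | nrel R v => rel R v
  | equal x y => nequal x y
  | nequal x y => equal x y
  | and φ ψ => or (nnfNeg φ) (nnfNeg ψ)
  | or φ ψ => and (nnfNeg φ) (nnfNeg ψ)
  | all x φ => ex x (nnfNeg φ)
  | ex x φ => all x (nnfNeg φ)
  | not φ => nnf φ
end

theorem size_nnf_le (φ : Formula 𝒱 Vars) : φ.nnf.size ≤ φ.size ∧ (nnfNeg φ).size ≤ φ.size := by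
  induction φ <;> simp_all [nnf, nnfNeg, size] <;> omega

/-- Free variables of a formula. -/
def FV [DecidableEq Vars] : Formula 𝒱 Vars → Finset Vars
  | rel _ v => Finset.image v Finset.univ
  | nrel _ v => Finset.image v Finset.univ
  | equal x y => {x, y}
  | nequal x y => {x, y}
  | and φ ψ => φ.FV ∪ ψ.FV
  | or φ ψ => φ.FV ∪ ψ.FV
  | all x φ => φ.FV.erase x
  | ex x φ => φ.FV.erase x
  | not φ => φ.FV

end Formula

section Semantics

variable {𝒱 : Vocab} {Vars A K : Type} [DecidableEq Vars] [Fintype A] [DecidableEq A]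
  [CommSemiring K]

/-- The extension of a `K`-interpretation `π : Lit 𝒱 A → K` to first-order formulas,
relative to a valuation `ν : Vars → A`:  `eval π φ ν = π⟦φ⟧ν`. -/
def eval (π : Lit 𝒱 A → K) : Formula 𝒱 Vars → (Vars → A) → K
  | .rel R v, ν => π ⟨true, R, fun i => ν (v i)⟩
  | .nrel R v, ν => π ⟨false, R, fun i => ν (v i)⟩
  | .equal x y, ν => if ν x = ν y then 1 else 0
  | .nequal x y, ν => if ν x ≠ ν y then 1 else 0
  | .and φ ψ, ν => eval π φ ν * eval π ψ ν
  | .or φ ψ, ν => eval π φ ν + eval π ψ ν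
  | .all x φ, ν => ∏ a : A, eval π φ (Function.update ν x a)
  | .ex x φ, ν => ∑ a : A, eval π φ (Function.update ν x a)
  | .not φ, ν => eval π (Formula.nnfNeg φ) ν
termination_by φ _ => φ.size
decreasing_by
  all_goals simp [Formula.size]
  all_goals first
    | omega
    | exact Nat.lt_succ_of_le (Formula.size_nnf_le _).2
    | exact (Formula.size_nnf_le _).2

end Semantics

/-- A `𝒱`-structure with universe `A`: an interpretation of each relation symbol. -/
def Struc (𝒱 : Vocab) (A : Type) := (R : 𝒱.Rel) → (Fin (𝒱.arity R) → A) → Prop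

/-- Standard (Tarski) satisfaction of a literal in a structure. -/
def Struc.SatLit {𝒱 : Vocab} {A : Type} (𝔄 : Struc 𝒱 A) (L : Lit 𝒱 A) : Prop :=
  if L.pos then 𝔄 L.R L.args else ¬ 𝔄 L.R L.args

section Sat

variable {𝒱 : Vocab} {Vars A : Type} [DecidableEq Vars]

/-- Standard (Tarski) satisfaction relation `𝔄 ⊨ φ[ν]`. -/
def Sat (𝔄 : Struc 𝒱 A) : Formula 𝒱 Vars → (Vars → A) → Prop
  | .rel R v, ν => 𝔄 R (fun i => ν (v i))
  | .nrel R v, ν => ¬ 𝔄 R (fun i => ν (v i))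
  | .equal x y, ν => ν x = ν y
  | .nequal x y, ν => ν x ≠ ν y
  | .and φ ψ, ν => Sat 𝔄 φ ν ∧ Sat 𝔄 ψ ν
  | .or φ ψ, ν => Sat 𝔄 φ ν ∨ Sat 𝔄 ψ ν
  | .all x φ, ν => ∀ a : A, Sat 𝔄 φ (Function.update ν x a)
  | .ex x φ, ν => ∃ a : A, Sat 𝔄 φ (Function.update ν x a)
  | .not φ, ν => ¬ Sat 𝔄 φ ν

end Sat

section ModelDefining

variable {𝒱 : Vocab} {A K : Type} [CommSemiring K]

/-- A `K`-interpretation is model-defining if for each fact exactly one of the values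
assigned to it and to its negation is `0`. -/
def ModelDefining (π : Lit 𝒱 A → K) : Prop :=
  ∀ L : Lit 𝒱 A, (π L = 0 ∧ π L.neg ≠ 0) ∨ (π L ≠ 0 ∧ π L.neg = 0)

/-- The structure `𝔄_π` defined by a model-defining interpretation `π`:
it satisfies a literal `L` iff `π L ≠ 0`. -/
def StrucOf (π : Lit 𝒱 A → K) : Struc 𝒱 A := fun R a => π ⟨true, R, a⟩ ≠ 0

end ModelDefining

/-- A commutative semiring is positive if it is `+`-positive and has no divisors of zero. -/
def IsPositive (K : Type) [CommSemiring K] : Prop :=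
  (∀ a b : K, a + b = 0 → a = 0 ∧ b = 0) ∧ ∀ a b : K, a * b = 0 → a = 0 ∨ b = 0


open MvPolynomial

/-- Generating relation for the dual-indeterminate congruence: `p · p̄ = 0` for `p ∈ X`
(we realize the set of tokens `X ∪ X̄` as the sum type `X ⊕ X`, with `Sum.inl p = p`
and `Sum.inr p = p̄`). -/
def pairRel (X : Type) : MvPolynomial (X ⊕ X) ℕ → MvPolynomial (X ⊕ X) ℕ → Prop :=
  fun a b => b = 0 ∧ ∃ p : X, a = MvPolynomial.X (Sum.inl p) * MvPolynomial.X (Sum.inr p)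

/-- The semiring congruence on `ℕ[X ∪ X̄]` generated by `p · p̄ = 0` for all `p ∈ X`. -/
noncomputable def dualCon (X : Type) : RingCon (MvPolynomial (X ⊕ X) ℕ) := ringConGen (pairRel X)

/-- `ℕ[X,X̄]`: the commutative semiring of dual-indeterminate polynomials, i.e. the
quotient of the polynomial semiring `ℕ[X ∪ X̄]` by the congruence `p · p̄ = 0`. -/
abbrev DualPoly (X : Type) := (dualCon X).Quotient

/-- The image in `ℕ[X,X̄]` of a provenance token `x ∈ X ∪ X̄`. -/
noncomputable def tok {X : Type} (x : X ⊕ X) : DualPoly X :=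
  ((MvPolynomial.X x : MvPolynomial (X ⊕ X) ℕ) : DualPoly X)

open Classical in
/-- Deleting from a polynomial all monomials that contain a pair of complementary tokens. -/
noncomputable def clean {X : Type} (q : MvPolynomial (X ⊕ X) ℕ) : MvPolynomial (X ⊕ X) ℕ :=
  ∑ m ∈ q.support.filter
      (fun m => ¬ ∃ p : X, m (Sum.inl p) ≠ 0 ∧ m (Sum.inr p) ≠ 0),
    MvPolynomial.monomial m (q.coeff m)

/-- A representative polynomial of an element of `ℕ[X,X̄]`. -/
noncomputable def qrep {X : Type} (q : DualPoly X) : MvPolynomial (X ⊕ X) ℕ :=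
  (Quot.exists_rep q).choose

/-- The coefficient of the monomial `m` in a dual-indeterminate polynomial:
the coefficient of `m` in the canonical (clean) representative. -/
noncomputable def coeffQ {X : Type} (q : DualPoly X) (m : (X ⊕ X) →₀ ℕ) : ℕ :=
  (clean (qrep q)).coeff m

/-- The sum of the monomial coefficients of a dual-indeterminate polynomial. -/
noncomputable def sumCoeff {X : Type} (q : DualPoly X) : ℕ :=
  ∑ m ∈ (clean (qrep q)).support, (clean (qrep q)).coeff m


section DualInterp

variable {𝒱 : Vocab} {A X : Type}

/-- A provenance-tracking interpretation: positive facts are annotated with positive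
tokens (or `0`, `1`), negative facts with negative tokens (or `0`, `1`), with the
convention that the complementary token `p̄` may only annotate the negation of the
fact annotated by `p` (and vice versa). -/
def ProvTracking (π : Lit 𝒱 A → DualPoly X) : Prop :=
  (∀ L : Lit 𝒱 A, L.pos = true → π L = 0 ∨ π L = 1 ∨ ∃ p : X, π L = tok (Sum.inl p)) ∧
  (∀ L : Lit 𝒱 A, L.pos = false → π L = 0 ∨ π L = 1 ∨ ∃ p : X, π L = tok (Sum.inr p)) ∧
  (∀ L L' : Lit 𝒱 A, ∀ p : X,
     π L = tok (Sum.inl p) → π L' = tok (Sum.inr p) → L' = L.neg)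

/-- A model-compatible interpretation: each fact is either tracked by a pair of
complementary tokens `z`, `z̄` (a distinct pair for each tracked fact), or is
annotated by `0` and `1` (untracked false fact) or by `1` and `0` (untracked true
fact). -/
def ModelCompatible (π : Lit 𝒱 A → DualPoly X) : Prop :=
  (∀ L : Lit 𝒱 A, L.pos = true →
      (∃ z : X, π L = tok (Sum.inl z) ∧ π L.neg = tok (Sum.inr z)) ∨
      (π L = 0 ∧ π L.neg = 1) ∨ (π L = 1 ∧ π L.neg = 0)) ∧
  (∀ L L' : Lit 𝒱 A, ∀ z : X, π L = tok (Sum.inl z) → π L' = tok (Sum.inl z) → L = L')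

/-- A structure `𝔄` (with the same universe `A`) is compatible with `π` if `𝔄 ⊨ L`
for every literal `L` with `π L = 1`. -/
def Compatible (π : Lit 𝒱 A → DualPoly X) (𝔄 : Struc 𝒱 A) : Prop :=
  ∀ L : Lit 𝒱 A, π L = 1 → 𝔄.SatLit L

open Classical in
/-- The specialization `π↓𝔄` of an interpretation `π` with respect to a structure `𝔄`:
`π↓𝔄(L) = π(L)` if `𝔄 ⊨ L` and `π↓𝔄(L) = 0` otherwise. -/
noncomputable def specialize {K : Type} [CommSemiring K] (π : Lit 𝒱 A → K)
    (𝔄 : Struc 𝒱 A) : Lit 𝒱 A → K :=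
  fun L => if 𝔄.SatLit L then π L else 0

end DualInterp



section Aux

open Classical

/-- Lift an evaluation of tokens (killing complementary pairs) to `ℕ[X,X̄]`. -/
noncomputable def dLift {X : Type} (f : X ⊕ X → ℕ)
    (hf : ∀ p : X, f (Sum.inl p) * f (Sum.inr p) = 0) : DualPoly X →+* ℕ where
  toFun := Quotient.lift (MvPolynomial.eval f) (by
    intro a b h
    have h' : RingConGen.Rel (pairRel X) a b := h
    clear h
    induction h' with
    | of x y hxy =>
      obtain ⟨rfl, p, rfl⟩ := hxy
      simp [hf p]
    | refl => rfl
    | symm _ ih => exact ih.symm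
    | trans _ _ ih1 ih2 => exact ih1.trans ih2
    | add _ _ ih1 ih2 => simp only [map_add, ih1, ih2]
    | mul _ _ ih1 ih2 => simp only [map_mul, ih1, ih2])
  map_one' := by show MvPolynomial.eval f 1 = 1; simp
  map_mul' := by
    intro x y
    refine Quotient.inductionOn₂ x y (fun a b => ?_)
    show MvPolynomial.eval f (a * b) = MvPolynomial.eval f a * MvPolynomial.eval f b
    simp
  map_zero' := by show MvPolynomial.eval f 0 = 0; simp
  map_add' := by
    intro x y
    refine Quotient.inductionOn₂ x y (fun a b => ?_)
    show MvPolynomial.eval f (a + b) = MvPolynomial.eval f a + MvPolynomial.eval f b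
    simp

theorem dLift_coe {X : Type} (f : X ⊕ X → ℕ)
    (hf : ∀ p : X, f (Sum.inl p) * f (Sum.inr p) = 0) (q : MvPolynomial (X ⊕ X) ℕ) :
    dLift f hf (q : DualPoly X) = MvPolynomial.eval f q := rfl

theorem one_ne_zero_dual {X : Type} : (1 : DualPoly X) ≠ 0 := by
  intro h
  have := congrArg (dLift (X := X) (fun _ => 0) (fun _ => by simp)) h
  simpa using this

theorem tok_ne_zero {X : Type} (x : X ⊕ X) : tok x ≠ 0 := by
  classical
  have hf : ∀ p : X, (if Sum.inl p = x then 1 else 0) * (if Sum.inr p = x then 1 else 0) = 0 := by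
    intro p
    rcases x with a | a
    · simp
    · simp
  intro h
  have := congrArg (dLift (fun y => if y = x then 1 else 0) (by
    intro p; simpa using hf p)) h
  rw [tok] at this
  rw [dLift_coe, map_zero, MvPolynomial.eval_X] at this
  simp at this

/-- A literal and its negation cannot both be satisfied. -/
theorem not_satLit_both {𝒱 : Vocab} {A : Type} (𝔄 : Struc 𝒱 A) (L : Lit 𝒱 A) :
    ¬ (𝔄.SatLit L ∧ 𝔄.SatLit L.neg) := by
  obtain ⟨pos, R, a⟩ := L
  cases pos <;> simp [Struc.SatLit, Lit.neg] <;> tauto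

theorem satLit_iff {𝒱 : Vocab} {A X : Type} (β : Lit 𝒱 A → DualPoly X)
    (hβ' : ModelDefining β) (L : Lit 𝒱 A) :
    (StrucOf β).SatLit L ↔ β L ≠ 0 := by
  obtain ⟨pos, R, a⟩ := L
  cases pos
  · have hm := hβ' ⟨false, R, a⟩
    simp only [Lit.neg, Bool.not_false] at hm
    simp only [Struc.SatLit, StrucOf]
    norm_num
    tauto
  · simp [Struc.SatLit, StrucOf]

section EvalLemmas

variable {𝒱 : Vocab} {Vars A : Type} [DecidableEq Vars] [Fintype A] [DecidableEq A]

/-- Evaluation commutes with semiring homomorphisms. -/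
theorem eval_ringHom {K K' : Type} [CommSemiring K] [CommSemiring K'] (g : K →+* K')
    (π : Lit 𝒱 A → K) :
    ∀ (n : ℕ) (φ : Formula 𝒱 Vars), φ.size ≤ n → ∀ ν : Vars → A,
      g (eval π φ ν) = eval (fun L => g (π L)) φ ν := by
  intro n
  induction n with
  | zero => intro φ h; cases φ <;> simp [Formula.size] at h
  | succ n ih =>
    intro φ h ν
    cases φ with
    | rel R v => simp [_root_.eval]
    | nrel R v => simp [_root_.eval]
    | equal x y => simp only [_root_.eval]; split <;> simp
    | nequal x y => simp only [_root_.eval]; split <;> simp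
    | and φ ψ =>
      simp only [Formula.size] at h
      simp only [_root_.eval, map_mul, ih φ (by omega) ν, ih ψ (by omega) ν]
    | or φ ψ =>
      simp only [Formula.size] at h
      simp only [_root_.eval, map_add, ih φ (by omega) ν, ih ψ (by omega) ν]
    | all x φ =>
      simp only [Formula.size] at h
      simp only [_root_.eval, map_prod]
      exact Finset.prod_congr rfl (fun a _ => ih φ (by omega) _)
    | ex x φ =>
      simp only [Formula.size] at h
      simp only [_root_.eval, map_sum]
      exact Finset.sum_congr rfl (fun a _ => ih φ (by omega) _)
    | not φ =>
      simp only [Formula.size] at h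
      simp only [_root_.eval]
      exact ih (Formula.nnfNeg φ) (le_trans (Formula.size_nnf_le φ).2 (by omega)) ν

/-- `nnf` preserves satisfaction and `nnfNeg` negates it. -/
theorem sat_nnf {𝔄 : Struc 𝒱 A} (φ : Formula 𝒱 Vars) :
    ∀ ν : Vars → A, (Sat 𝔄 φ.nnf ν ↔ Sat 𝔄 φ ν) ∧ (Sat 𝔄 (Formula.nnfNeg φ) ν ↔ ¬ Sat 𝔄 φ ν) := by
  induction φ with
  | rel R v => intro ν; exact ⟨Iff.rfl, Iff.rfl⟩
  | nrel R v => intro ν; exact ⟨Iff.rfl, not_not.symm⟩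
  | equal x y => intro ν; exact ⟨Iff.rfl, Iff.rfl⟩
  | nequal x y => intro ν; exact ⟨Iff.rfl, not_not.symm⟩
  | and φ ψ ihφ ihψ =>
    intro ν
    simp only [Formula.nnf, Formula.nnfNeg, Sat, (ihφ ν).1, (ihψ ν).1, (ihφ ν).2, (ihψ ν).2]
    tauto
  | or φ ψ ihφ ihψ =>
    intro ν
    simp only [Formula.nnf, Formula.nnfNeg, Sat, (ihφ ν).1, (ihψ ν).1, (ihφ ν).2, (ihψ ν).2]
    tauto
  | all x φ ihφ =>
    intro ν
    simp only [Formula.nnf, Formula.nnfNeg, Sat]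
    constructor
    · exact forall_congr' (fun a => (ihφ _).1)
    · rw [not_forall]
      exact exists_congr (fun a => (ihφ _).2)
  | ex x φ ihφ =>
    intro ν
    simp only [Formula.nnf, Formula.nnfNeg, Sat]
    constructor
    · exact exists_congr (fun a => (ihφ _).1)
    · rw [not_exists]
      exact forall_congr' (fun a => (ihφ _).2)
  | not φ ihφ =>
    intro ν
    simp only [Formula.nnf, Formula.nnfNeg, Sat]
    constructor
    · exact (ihφ ν).2
    · rw [not_not]; exact (ihφ ν).1

/-- Over `ℕ` with the indicator interpretation of a structure, nonzero evaluation is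
equivalent to satisfaction. -/
theorem eval_indicator (𝔄 : Struc 𝒱 A) :
    ∀ (n : ℕ) (φ : Formula 𝒱 Vars), φ.size ≤ n → ∀ ν : Vars → A,
      (eval (fun L => if 𝔄.SatLit L then (1 : ℕ) else 0) φ ν ≠ 0 ↔ Sat 𝔄 φ ν) := by
  intro n
  induction n with
  | zero => intro φ h; cases φ <;> simp [Formula.size] at h
  | succ n ih =>
    intro φ h ν
    cases φ with
    | rel R v =>
      simp only [_root_.eval, Sat]
      split
      · next hs => simpa [Struc.SatLit] using hs
      · next hs => simpa [Struc.SatLit] using hs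
    | nrel R v =>
      simp only [_root_.eval, Sat]
      split
      · next hs => simpa [Struc.SatLit] using hs
      · next hs => simpa [Struc.SatLit] using hs
    | equal x y => simp only [_root_.eval, Sat]; split <;> simp_all
    | nequal x y => simp only [_root_.eval, Sat]; split <;> simp_all
    | and φ ψ =>
      simp only [Formula.size] at h
      simp only [_root_.eval, Sat, Nat.mul_ne_zero_iff, ih φ (by omega) ν, ih ψ (by omega) ν]
    | or φ ψ =>
      simp only [Formula.size] at h
      simp only [_root_.eval, Sat, ← ih φ (by omega) ν, ← ih ψ (by omega) ν]
      omega
    | all x φ =>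
      simp only [Formula.size] at h
      simp only [_root_.eval, Sat, Finset.prod_ne_zero_iff]
      exact ⟨fun hp a => (ih φ (by omega) _).1 (hp a (Finset.mem_univ a)),
        fun hp a _ => (ih φ (by omega) _).2 (hp a)⟩
    | ex x φ =>
      simp only [Formula.size] at h
      simp only [_root_.eval, Sat, Ne, Finset.sum_eq_zero_iff, not_forall]
      constructor
      · rintro ⟨a, _, ha⟩; exact ⟨a, (ih φ (by omega) _).1 ha⟩
      · rintro ⟨a, ha⟩; exact ⟨a, Finset.mem_univ a, (ih φ (by omega) _).2 ha⟩
    | not φ =>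
      simp only [Formula.size] at h
      simp only [_root_.eval]
      rw [ih (Formula.nnfNeg φ) (le_trans (Formula.size_nnf_le φ).2 (by omega)) ν]
      exact (sat_nnf φ ν).2.trans (by simp [Sat])

/-- If a formula fails in the model defined by `β`, then its evaluation is zero. -/
theorem eval_eq_zero_of_not_sat {X : Type} (β : Lit 𝒱 A → DualPoly X)
    (hβ' : ModelDefining β) :
    ∀ (n : ℕ) (φ : Formula 𝒱 Vars), φ.size ≤ n → ∀ ν : Vars → A,
      ¬ Sat (StrucOf β) φ ν → eval β φ ν = 0 := by
  intro n
  induction n with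
  | zero => intro φ h; cases φ <;> simp [Formula.size] at h
  | succ n ih =>
    intro φ h ν hns
    cases φ with
    | rel R v =>
      simp only [Sat] at hns
      have hsl := (satLit_iff β hβ' ⟨true, R, fun i => ν (v i)⟩).not
      simp only [Struc.SatLit, if_pos rfl, not_not] at hsl
      simp only [_root_.eval]
      exact hsl.1 hns
    | nrel R v =>
      simp only [Sat, not_not] at hns
      have hsl := (satLit_iff β hβ' ⟨false, R, fun i => ν (v i)⟩).not
      simp only [not_not] at hsl
      simp only [_root_.eval]
      apply hsl.1
      simp [Struc.SatLit, hns]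
    | equal x y => simp only [Sat] at hns; simp [_root_.eval, hns]
    | nequal x y => simp only [Sat, not_not] at hns; simp [_root_.eval, hns]
    | and φ ψ =>
      simp only [Formula.size] at h
      simp only [Sat, not_and_or] at hns
      rcases hns with hns | hns
      · simp [_root_.eval, ih φ (by omega) ν hns]
      · simp [_root_.eval, ih ψ (by omega) ν hns]
    | or φ ψ =>
      simp only [Formula.size] at h
      simp only [Sat, not_or] at hns
      simp [_root_.eval, ih φ (by omega) ν hns.1, ih ψ (by omega) ν hns.2]
    | all x φ =>
      simp only [Formula.size] at h
      simp only [Sat, not_forall] at hns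
      obtain ⟨a, ha⟩ := hns
      simp only [_root_.eval]
      exact Finset.prod_eq_zero (Finset.mem_univ a) (ih φ (by omega) _ ha)
    | ex x φ =>
      simp only [Formula.size] at h
      simp only [Sat, not_exists] at hns
      simp only [_root_.eval]
      exact Finset.sum_eq_zero (fun a _ => ih φ (by omega) _ (hns a))
    | not φ =>
      simp only [Formula.size] at h
      simp only [Sat, not_not] at hns
      simp only [_root_.eval]
      exact ih (Formula.nnfNeg φ) (le_trans (Formula.size_nnf_le φ).2 (by omega)) ν
        (fun hc => ((sat_nnf φ ν).2.1 hc) hns)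

end EvalLemmas

end Aux

/-- for a provenance-tracking, model-defining interpretation `β` with
defined model `𝔄_β`, and any sentence `φ`: `β⟦φ⟧ ≠ 0` iff `𝔄_β ⊨ φ`.  (This does not
follow from positivity, since `ℕ[X,X̄]` has divisors of zero.) -/
theorem provTracking_eval_ne_zero_iff_sat {𝒱 : Vocab} {Vars A X : Type}
    [DecidableEq Vars] [Fintype A] [DecidableEq A] [Nonempty A]
    (β : Lit 𝒱 A → DualPoly X) (hβ : ProvTracking β) (hβ' : ModelDefining β)
    (φ : Formula 𝒱 Vars) (hφ : φ.FV = ∅) (ν : Vars → A) :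
    eval β φ ν ≠ 0 ↔ Sat (StrucOf β) φ ν := by
  classical
  set 𝔄 := StrucOf β with h𝔄
  constructor
  · intro hne
    by_contra hns
    exact hne (eval_eq_zero_of_not_sat β hβ' φ.size φ le_rfl ν hns)
  · intro hs
    -- build the evaluation hom
    set f : X ⊕ X → ℕ := fun x => if ∃ L : Lit 𝒱 A, β L = tok x ∧ 𝔄.SatLit L then 1 else 0
      with hf_def
    have hf : ∀ p : X, f (Sum.inl p) * f (Sum.inr p) = 0 := by
      intro p
      by_contra hc
      have h1 : f (Sum.inl p) ≠ 0 := fun h => hc (by rw [h, zero_mul])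
      have h2 : f (Sum.inr p) ≠ 0 := fun h => hc (by rw [h, mul_zero])
      have e1 : ∃ L : Lit 𝒱 A, β L = tok (Sum.inl p) ∧ 𝔄.SatLit L := by
        by_contra hcc; exact h1 (by rw [hf_def]; exact if_neg hcc)
      have e2 : ∃ L : Lit 𝒱 A, β L = tok (Sum.inr p) ∧ 𝔄.SatLit L := by
        by_contra hcc; exact h2 (by rw [hf_def]; exact if_neg hcc)
      obtain ⟨L1, hL1, hs1⟩ := e1
      obtain ⟨L2, hL2, hs2⟩ := e2
      have : L2 = L1.neg := hβ.2.2 L1 L2 p hL1 hL2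
      exact not_satLit_both 𝔄 L1 ⟨hs1, this ▸ hs2⟩
    set g := dLift f hf with hg
    have hcomp : ∀ L : Lit 𝒱 A, g (β L) = if 𝔄.SatLit L then (1 : ℕ) else 0 := by
      intro L
      have hsat := satLit_iff β hβ' L
      rcases Bool.eq_false_or_eq_true L.pos with hpos | hpos
      · -- L.pos = false
        rcases hβ.1 L hpos with h0 | h1 | ⟨p, hp⟩
        · rw [h0, map_zero, if_neg (fun hc => (hsat.1 hc) h0)]
        · rw [h1, map_one, if_pos (hsat.2 (h1 ▸ one_ne_zero_dual))]
        · have hsL : 𝔄.SatLit L := hsat.2 (hp ▸ tok_ne_zero _)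
          rw [hp, if_pos hsL]
          show MvPolynomial.eval f (MvPolynomial.X (Sum.inl p)) = 1
          rw [MvPolynomial.eval_X, hf_def]
          exact if_pos ⟨L, hp, hsL⟩
      · rcases hβ.2.1 L hpos with h0 | h1 | ⟨p, hp⟩
        · rw [h0, map_zero, if_neg (fun hc => (hsat.1 hc) h0)]
        · rw [h1, map_one, if_pos (hsat.2 (h1 ▸ one_ne_zero_dual))]
        · have hsL : 𝔄.SatLit L := hsat.2 (hp ▸ tok_ne_zero _)
          rw [hp, if_pos hsL]
          show MvPolynomial.eval f (MvPolynomial.X (Sum.inr p)) = 1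
          rw [MvPolynomial.eval_X, hf_def]
          exact if_pos ⟨L, hp, hsL⟩
    intro h0
    have := eval_ringHom g β φ.size φ le_rfl ν
    rw [h0, map_zero] at this
    have heq : (fun L => g (β L)) = fun L => if 𝔄.SatLit L then (1 : ℕ) else 0 :=
      funext hcomp
    rw [heq] at this
    exact (eval_indicator 𝔄 φ.size φ le_rfl ν).2 hs this.symm
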